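/- Fix an anchor point (b_a, y_a) with 0 < b_a < y_a, and fixed parameters α > 0 and x_U ∈ [0, y_a); write Δ_a := y_a − b_a and y_U := y_a − x_U. Consider the two-piece price curve p^U(x) := 1 for x ≤ x_U and p^U(x) := 1 − α(x − x_U) for x ≥ x_U, and set b^U(x) := b_a − ∫₀ˣ p^U(t) dt. Then: (a) there exists a point x_L ∈ [0, y_a] satisfying p^U(x_L)·(y_a − x_L) = b^U(x_L) if and only if α ≥ 2(y_a − b_a)/(y_a − x_U)²; and (b) if this inequality holds, such x_L is unique, lies in (x_U, y_a], and is given by x_L = y_a − √((y_a − x_U)² − (2/α)(y_a − b_a)); moreover r_L := 1 − α(x_L − x_U) satisfies b^U(x_L) = r_L·(y_a − x_L), i.e., b_L = (1 − α(x_L − x_U))·(y_a − x_L). -/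

import Mathlib

/-- Proposition `prop:xm`, parts 1 and 3: existence, uniqueness and
    explicit formula for the lower cutoff `x_L` where the two-piece marginal price
    equals the reserve ratio, i.e. `p^U(x_L)·(y_a − x_L) = b^U(x_L)`. -/
theorem lower_cutoff_exists_iff
    (ba ya α xU : ℝ)
    (hba : 0 < ba) (hbya : ba < ya) (hα : 0 < α)
    (hxU0 : 0 ≤ xU) (hxUya : xU < ya) :
    let pU : ℝ → ℝ := fun t => if t ≤ xU then 1 else 1 - α * (t - xU)
    let bU : ℝ → ℝ := fun x => ba - ∫ t in (0:ℝ)..x, pU t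
    ((∃ z ∈ Set.Icc (0:ℝ) ya, pU z * (ya - z) = bU z) ↔
        2 * (ya - ba) / (ya - xU) ^ 2 ≤ α) ∧
    (2 * (ya - ba) / (ya - xU) ^ 2 ≤ α →
      let xL : ℝ := ya - Real.sqrt ((ya - xU) ^ 2 - 2 / α * (ya - ba))
      xL ∈ Set.Ioc xU ya ∧
      pU xL * (ya - xL) = bU xL ∧
      (∀ z ∈ Set.Icc (0:ℝ) ya, pU z * (ya - z) = bU z → z = xL) ∧
      bU xL = (1 - α * (xL - xU)) * (ya - xL)) := by
  intro pU bU
  have hpUt : ∀ t, pU t = if t ≤ xU then 1 else 1 - α * (t - xU) := fun _ => rfl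
  have hbUt : ∀ x, bU x = ba - ∫ t in (0:ℝ)..x, pU t := fun _ => rfl
  have hαne : α ≠ 0 := ne_of_gt hα
  have hY : 0 < ya - xU := by linarith
  set D : ℝ := (ya - xU) ^ 2 - 2 / α * (ya - ba) with hD
  have hDlt : D < (ya - xU) ^ 2 := by
    have h1 : 0 < 2 / α * (ya - ba) := mul_pos (by positivity) (by linarith)
    rw [hD]; linarith
  -- continuity and integrability
  have hpc : Continuous pU := by
    have heq : pU = fun t => 1 - α * max (t - xU) 0 := by
      funext t
      rw [hpUt]
      by_cases h : t ≤ xU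
      · rw [if_pos h, max_eq_right (by linarith : t - xU ≤ 0)]; ring
      · push_neg at h
        rw [if_neg (not_le.mpr h), max_eq_left (by linarith : (0:ℝ) ≤ t - xU)]
    rw [heq]; fun_prop
  have hint : ∀ a b : ℝ, IntervalIntegrable pU MeasureTheory.volume a b :=
    fun a b => hpc.intervalIntegrable a b
  -- integral pieces
  have hI1 : (∫ t in (0:ℝ)..xU, pU t) = xU := by
    rw [intervalIntegral.integral_congr (g := fun _ => (1:ℝ)) ?_]
    · simp
    · intro t ht
      rw [Set.uIcc_of_le hxU0] at ht
      rw [hpUt, if_pos ht.2]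
  have hI2 : ∀ z, xU ≤ z → (∫ t in xU..z, pU t) = (z - xU) - α * (z - xU) ^ 2 / 2 := by
    intro z hz
    rw [intervalIntegral.integral_congr (g := fun t => 1 - α * (t - xU)) ?_]
    · have hderiv : ∀ t ∈ Set.uIcc xU z,
          HasDerivAt (fun u => u - α * (u - xU) ^ 2 / 2) (1 - α * (t - xU)) t := by
        intro t _
        have h2 : HasDerivAt (fun u : ℝ => (u - xU) ^ 2) (2 * (t - xU)) t := by
          have := ((hasDerivAt_id t).sub_const xU).pow 2
          simpa [Pi.pow_def] using this
        have h4 := (hasDerivAt_id t).sub ((h2.const_mul α).div_const 2)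
        exact h4.congr_deriv (by ring)
      rw [intervalIntegral.integral_eq_sub_of_hasDerivAt hderiv
        ((by fun_prop : Continuous fun t : ℝ => 1 - α * (t - xU)).intervalIntegrable _ _)]
      ring
    · intro t ht
      rw [Set.uIcc_of_le hz] at ht
      rw [hpUt]
      by_cases h : t ≤ xU
      · have ht' : t = xU := le_antisymm h ht.1
        rw [if_pos h, ht']; ring
      · rw [if_neg h]
  have hbU_ge : ∀ z, xU ≤ z → bU z = ba - z + α * (z - xU) ^ 2 / 2 := by
    intro z hz
    have hsplit : (∫ t in (0:ℝ)..z, pU t) = (∫ t in (0:ℝ)..xU, pU t) + ∫ t in xU..z, pU t :=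
      (intervalIntegral.integral_add_adjacent_intervals (hint 0 xU) (hint xU z)).symm
    rw [hbUt, hsplit, hI1, hI2 z hz]; ring
  -- no solution with z ≤ xU
  have hno : ∀ z ∈ Set.Icc (0:ℝ) ya, z ≤ xU → ¬ (pU z * (ya - z) = bU z) := by
    intro z hz hle h
    have hIz : (∫ t in (0:ℝ)..z, pU t) = z := by
      rw [intervalIntegral.integral_congr (g := fun _ => (1:ℝ)) ?_]
      · simp
      · intro t ht
        rw [Set.uIcc_of_le hz.1] at ht
        rw [hpUt, if_pos (le_trans ht.2 hle)]
    rw [hpUt, if_pos hle, hbUt, hIz, one_mul] at h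
    linarith
  have hpge : ∀ z, xU ≤ z → pU z = 1 - α * (z - xU) := by
    intro z hz
    rw [hpUt]
    by_cases h : z ≤ xU
    · have : z = xU := le_antisymm h hz
      rw [if_pos h, this]; ring
    · rw [if_neg h]
  -- key equivalence for z ≥ xU
  have hiff : ∀ z, xU ≤ z → (pU z * (ya - z) = bU z ↔ (ya - z) ^ 2 = D) := by
    intro z hz
    rw [hpge z hz, hbU_ge z hz]
    have key : (1 - α * (z - xU)) * (ya - z) - (ba - z + α * (z - xU) ^ 2 / 2)
        = α / 2 * ((ya - z) ^ 2 - D) := by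
      rw [hD]; field_simp; ring
    constructor
    · intro h
      have h0 : α / 2 * ((ya - z) ^ 2 - D) = 0 := by rw [← key]; linarith
      rcases mul_eq_zero.mp h0 with h1 | h1
      · exact absurd h1 (by positivity)
      · linarith
    · intro h
      have h0 : α / 2 * ((ya - z) ^ 2 - D) = 0 := by rw [h]; ring
      linarith [key]
  have hcond : (2 * (ya - ba) / (ya - xU) ^ 2 ≤ α) ↔ 0 ≤ D := by
    rw [hD, div_le_iff₀ (by positivity : (0:ℝ) < (ya - xU) ^ 2)]
    constructor <;> intro h
    · have h2 : 2 / α * (ya - ba) ≤ (ya - xU) ^ 2 := by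
        rw [div_mul_eq_mul_div, div_le_iff₀ hα]; linarith
      linarith
    · have h2 : 2 / α * (ya - ba) ≤ (ya - xU) ^ 2 := by linarith
      rw [div_mul_eq_mul_div, div_le_iff₀ hα] at h2; linarith
  constructor
  · constructor
    · rintro ⟨z, hz, hzeq⟩
      by_cases h : z ≤ xU
      · exact absurd hzeq (hno z hz h)
      · push_neg at h
        have hd := (hiff z h.le).mp hzeq
        rw [hcond, ← hd]; positivity
    · intro h
      have hD0 : 0 ≤ D := hcond.mp h
      have hsle : Real.sqrt D ≤ ya - xU := by
        rw [show ya - xU = Real.sqrt ((ya - xU) ^ 2) from (Real.sqrt_sq hY.le).symm]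
        exact Real.sqrt_le_sqrt hDlt.le
      refine ⟨ya - Real.sqrt D, ⟨by linarith, by linarith [Real.sqrt_nonneg D]⟩, ?_⟩
      rw [hiff _ (by linarith)]
      rw [show ya - (ya - Real.sqrt D) = Real.sqrt D by ring, Real.sq_sqrt hD0]
  · intro h
    intro xL
    have hxLdef : xL = ya - Real.sqrt D := rfl
    have hD0 : 0 ≤ D := hcond.mp h
    have hslt : Real.sqrt D < ya - xU := by
      rw [show ya - xU = Real.sqrt ((ya - xU) ^ 2) from (Real.sqrt_sq hY.le).symm]
      exact Real.sqrt_lt_sqrt hD0 hDlt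
    have hxLgt : xU < xL := by rw [hxLdef]; linarith
    have hxLle : xL ≤ ya := by rw [hxLdef]; linarith [Real.sqrt_nonneg D]
    have heqL : pU xL * (ya - xL) = bU xL := by
      rw [hiff _ hxLgt.le, hxLdef,
        show ya - (ya - Real.sqrt D) = Real.sqrt D by ring, Real.sq_sqrt hD0]
    refine ⟨⟨hxLgt, hxLle⟩, heqL, ?_, ?_⟩
    · intro z hz hzeq
      by_cases hc : z ≤ xU
      · exact absurd hzeq (hno z hz hc)
      · push_neg at hc
        have hd := (hiff z hc.le).mp hzeq
        have : ya - z = Real.sqrt D := by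
          rw [← hd, Real.sqrt_sq (by linarith [hz.2] : 0 ≤ ya - z)]
        rw [hxLdef]; linarith
    · rw [← heqL, hpge xL hxLgt.le]
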